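/- (Lemma 1, monotonicity of roots within a group) Fix an integer r ≥ 1, an integer i ≥ 0, and an integer j with 1 ≤ j ≤ r. Let y_{1,n} > y_{2,n} > … > y_{i+1,n} denote the roots of Z_n arranged in decreasing order for n = (r+1)i+j and n = (r+1)i+j+1 (each of these polynomials has exactly i+1 distinct negative real roots). Then for every m with 1 ≤ m ≤ i+1, one has y_{m,(r+1)i+j+1} > y_{m,(r+1)i+j}. -/

import Mathlib

open Polynomial

/-- The partition function of the 1d classical Rydberg blockade chain with `n` sites and
blockade radius `r`:  `Z_n(y) = Σ_{m=0}^{⌊(n+r)/(r+1)⌋} C(n - r(m-1), m) y^m`. -/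
noncomputable def Z (r n : ℕ) : Polynomial ℝ :=
  ∑ m ∈ Finset.range ((n + r) / (r + 1) + 1),
    Polynomial.C ((Nat.choose (n - r * (m - 1)) m : ℝ)) * Polynomial.X ^ m



open Finset

/-- number of roots / degree -/
def dd (r n : ℕ) : ℕ := (n + r) / (r + 1)

lemma choose_vanish (r n m : ℕ) (h : dd r n < m) : Nat.choose (n - r * (m - 1)) m = 0 := by
  apply Nat.choose_eq_zero_of_lt
  have h2 : n + r < m * (r + 1) := by
    rw [← Nat.div_lt_iff_lt_mul (Nat.succ_pos r)]; exact h
  obtain ⟨mm, rfl⟩ : ∃ mm, m = mm + 1 := ⟨m - 1, by omega⟩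
  have e1 : (mm + 1) * (r + 1) = mm * r + mm + r + 1 := by ring
  have e2 : r * (mm + 1 - 1) = mm * r := by rw [Nat.add_sub_cancel]; ring
  omega

lemma Z_coeff (r n m : ℕ) : (Z r n).coeff m = (Nat.choose (n - r * (m - 1)) m : ℝ) := by
  unfold Z
  rw [Polynomial.finset_sum_coeff]
  simp only [Polynomial.coeff_C_mul, Polynomial.coeff_X_pow]
  rw [Finset.sum_eq_single m]
  · simp
  · intro b _ hb; simp [hb, if_neg (Ne.symm hb)]
  · intro hm
    simp only [Finset.mem_range, not_lt] at hm
    have : dd r n < m := by unfold dd at *; omega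
    simp [choose_vanish r n m this]

lemma dd_mono (r : ℕ) {a b : ℕ} (h : a ≤ b) : dd r a ≤ dd r b :=
  Nat.div_le_div_right (by omega)

lemma dd_succ_le (r n : ℕ) : dd r (n + 1) ≤ dd r n + 1 := by
  unfold dd
  have : n + 1 + r ≤ (n + r) + 1 * (r + 1) := by omega
  calc (n + 1 + r) / (r + 1) ≤ ((n + r) + 1 * (r + 1)) / (r + 1) := Nat.div_le_div_right this
    _ = (n + r) / (r + 1) + 1 := by rw [Nat.add_mul_div_right _ _ (Nat.succ_pos r)]

lemma dd_sub_r (r n : ℕ) (h : r ≤ n) : dd r (n + 1) = dd r (n - r) + 1 := by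
  unfold dd
  have : n + 1 + r = (n - r + r) + 1 * (r + 1) := by omega
  rw [this, Nat.add_mul_div_right _ _ (Nat.succ_pos r)]

lemma dd_le_self (r n : ℕ) (hn : 1 ≤ n) : dd r n ≤ n := by
  unfold dd
  calc (n + r) / (r + 1) ≤ (n * (r + 1)) / (r + 1) := Nat.div_le_div_right (by nlinarith)
    _ = n := Nat.mul_div_cancel _ (Nat.succ_pos r)

lemma top_coeff_pos (r n : ℕ) : 0 < Nat.choose (n - r * (dd r n - 1)) (dd r n) := by
  apply Nat.choose_pos
  rcases Nat.eq_zero_or_pos (dd r n) with h | h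
  · simp [h]
  · have h1 : dd r n * (r + 1) ≤ n + r := Nat.div_mul_le_self _ _ |>.trans (le_refl _)
    obtain ⟨t, ht⟩ : ∃ t, dd r n = t + 1 := ⟨dd r n - 1, by omega⟩
    rw [ht] at h1 ⊢
    have e1 : (t + 1) * (r + 1) = r * t + t + r + 1 := by ring
    have e2 : r * (t + 1 - 1) = r * t := by rw [Nat.add_sub_cancel]
    omega

lemma Z_natDegree (r n : ℕ) : (Z r n).natDegree = dd r n := by
  have h1 : (Z r n).coeff (dd r n) ≠ 0 := by
    rw [Z_coeff]
    exact_mod_cast Nat.cast_pos.mpr (top_coeff_pos r n) |>.ne'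
  apply le_antisymm
  · apply Polynomial.natDegree_le_iff_coeff_eq_zero.mpr
    intro m hm
    rw [Z_coeff]
    exact_mod_cast congrArg Nat.cast (choose_vanish r n m hm)
  · exact Polynomial.le_natDegree_of_ne_zero h1

lemma Z_ne_zero (r n : ℕ) : Z r n ≠ 0 := by
  intro h
  have := Z_coeff r n 0
  rw [h] at this
  simp at this

lemma Z_leadingCoeff_pos (r n : ℕ) : 0 < (Z r n).leadingCoeff := by
  rw [Polynomial.leadingCoeff, Z_natDegree, Z_coeff]
  exact_mod_cast top_coeff_pos r n

lemma Z_eval_zero (r n : ℕ) : (Z r n).eval 0 = 1 := by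
  rw [← Polynomial.coeff_zero_eq_eval_zero, Z_coeff]
  simp

/-- the key recurrence -/
lemma Z_rec (r n : ℕ) (hr : 1 ≤ r) : Z r (n + 1) = Z r n + X * Z r (n - r) := by
  ext m
  rw [Z_coeff, Polynomial.coeff_add, Z_coeff]
  rcases Nat.eq_zero_or_pos m with rfl | hm
  · simp
  obtain ⟨mm, rfl⟩ : ∃ mm, m = mm + 1 := ⟨m - 1, by omega⟩
  rw [Polynomial.coeff_X_mul, Z_coeff]
  simp only [Nat.add_sub_cancel]
  have key : Nat.choose (n + 1 - r * mm) (mm + 1) =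
      Nat.choose (n - r * mm) (mm + 1) + Nat.choose (n - r - r * (mm - 1)) mm := by
    rcases Nat.eq_zero_or_pos mm with rfl | hmm
    · simp [Nat.choose_one_right]
    obtain ⟨t, rfl⟩ : ∃ t, mm = t + 1 := ⟨mm - 1, by omega⟩
    simp only [Nat.add_sub_cancel]
    have e0 : r * (t + 1) = r + r * t := by ring
    have e3 : n - r - r * t = n - r * (t + 1) := by omega
    rw [e3]
    rcases le_or_gt (r * (t + 1)) n with h | h
    · have e1 : n + 1 - r * (t + 1) = (n - r * (t + 1)) + 1 := by omega
      rw [e1, Nat.choose_succ_succ]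
      simp only [Nat.succ_eq_add_one]
      omega
    · have h1 : n + 1 - r * (t + 1) < t + 2 := by omega
      have h2 : n - r * (t + 1) < t + 2 := by omega
      have h3 : n - r * (t + 1) = 0 := by omega
      rw [Nat.choose_eq_zero_of_lt h1, Nat.choose_eq_zero_of_lt h2, h3]
      simp
  exact_mod_cast congrArg (Nat.cast : ℕ → ℝ) key

-- sign of a product of K negative numbers
lemma negprod (K : ℕ) (f : ℕ → ℝ) (hf : ∀ k < K, f k < 0) :
    0 < (-1 : ℝ) ^ K * ∏ k ∈ range K, f k := by
  induction K with
  | zero => simp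
  | succ K ih =>
    rw [Finset.prod_range_succ, pow_succ]
    have h1 := ih (fun k hk => hf k (by omega))
    have h2 := hf K (by omega)
    nlinarith

-- sign of evaluation of a split polynomial with K roots above x
lemma countsign (D K : ℕ) (a : ℝ) (ha : 0 < a) (z : ℕ → ℝ) (x : ℝ) (hK : K ≤ D)
    (hgt : ∀ k < K, x < z k) (hlt : ∀ k, K ≤ k → k < D → z k < x) :
    0 < (-1 : ℝ) ^ K * Polynomial.eval x (C a * ∏ k ∈ range D, (X - C (z k))) := by
  rw [Polynomial.eval_mul, Polynomial.eval_C, Polynomial.eval_prod]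
  simp only [Polynomial.eval_sub, Polynomial.eval_X, Polynomial.eval_C]
  rw [← Finset.prod_range_mul_prod_Ico _ hK]
  have h1 : 0 < (-1 : ℝ) ^ K * ∏ k ∈ range K, (x - z k) :=
    negprod K _ (fun k hk => by have := hgt k hk; linarith)
  have h2 : 0 < ∏ k ∈ Finset.Ico K D, (x - z k) := by
    apply Finset.prod_pos
    intro k hk
    rw [Finset.mem_Ico] at hk
    have := hlt k hk.1 hk.2
    linarith
  nlinarith [mul_pos (mul_pos ha h1) h2]

-- two incompatible signs
lemma sign_incompat {K : ℕ} {E : ℝ} (h1 : 0 < (-1 : ℝ) ^ K * E) (h2 : 0 < (-1 : ℝ) ^ (K + 1) * E) : False := by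
  rw [pow_succ] at h2
  nlinarith

lemma parity_sign {K : ℕ} {E : ℝ} (h : 0 < (-1 : ℝ) ^ K * E) :
    (Even K → 0 < E) ∧ (Odd K → E < 0) := by
  constructor
  · intro he; rw [he.neg_one_pow] at h; linarith
  · intro ho; rw [ho.neg_one_pow] at h; linarith

-- a polynomial with m distinct roots has natDegree ≥ m
lemma distinct_roots_le (p : Polynomial ℝ) (hp : p ≠ 0) (m : ℕ) (y : ℕ → ℝ)
    (hroot : ∀ k < m, p.IsRoot (y k))
    (hinj : ∀ k < m, ∀ l < m, y k = y l → k = l) : m ≤ p.natDegree := by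
  have hsub : ((Finset.range m).image y) ⊆ p.roots.toFinset := by
    intro x hx
    rw [Finset.mem_image] at hx
    obtain ⟨k, hk, rfl⟩ := hx
    rw [Multiset.mem_toFinset, Polynomial.mem_roots hp]
    exact hroot k (Finset.mem_range.mp hk)
  have hcard : ((Finset.range m).image y).card = m := by
    rw [Finset.card_image_of_injOn, Finset.card_range]
    intro a ha b hb hab
    exact hinj a (Finset.mem_range.mp ha) b (Finset.mem_range.mp hb) hab
  calc m = ((Finset.range m).image y).card := hcard.symm
    _ ≤ p.roots.toFinset.card := Finset.card_le_card hsub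
    _ ≤ Multiset.card p.roots := Multiset.toFinset_card_le _
    _ ≤ p.natDegree := Polynomial.card_roots' p

-- splitting: a polynomial of degree D with D distinct roots factors
lemma split_poly (p : Polynomial ℝ) (hp : p ≠ 0) (D : ℕ) (hD : p.natDegree = D) (y : ℕ → ℝ)
    (hroot : ∀ k < D, p.IsRoot (y k))
    (hinj : ∀ k < D, ∀ l < D, y k = y l → k = l) :
    p = C p.leadingCoeff * ∏ k ∈ range D, (X - C (y k)) := by
  have hmu : (Multiset.map y (Finset.range D).val) ≤ p.roots := by
    rw [Multiset.le_iff_count]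
    intro x
    classical
    by_cases hx : x ∈ Multiset.map y (Finset.range D).val
    · have h1 : Multiset.count x (Multiset.map y (Finset.range D).val) = 1 := by
        apply Multiset.count_eq_one_of_mem _ hx
        apply Multiset.Nodup.map_on
        · intro a ha b hb hab
          exact hinj a (by simpa using ha) b (by simpa using hb) hab
        · exact (Finset.range D).nodup
      rw [h1]
      rw [Multiset.one_le_count_iff_mem, Polynomial.mem_roots hp]
      obtain ⟨k, hk, rfl⟩ := Multiset.mem_map.mp hx
      exact hroot k (by simpa using hk)
    · rw [Multiset.count_eq_zero.mpr hx]
      omega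
  have hcard : Multiset.card (Multiset.map y (Finset.range D).val) = D := by simp
  have hroots : p.roots = Multiset.map y (Finset.range D).val := by
    apply (Multiset.eq_of_le_of_card_le hmu ?_).symm
    rw [hcard, ← hD]
    exact Polynomial.card_roots' p
  have hsplits : Polynomial.Splits p := by
    rw [Polynomial.splits_iff_card_roots, hroots, hcard, hD]
  have h2 := hsplits.eq_prod_roots
  rw [hroots, Multiset.map_map] at h2
  have h3 : (∏ k ∈ range D, (X - C (y k))) =
      (Multiset.map ((fun a => X - C a) ∘ y) (Finset.range D).val).prod := by
    rw [Finset.prod_eq_multiset_prod]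
    rfl
  rw [h3]
  exact h2

/-- `y` enumerates (in strictly decreasing order) the distinct negative real roots of `Z r n`. -/
def SR (r n : ℕ) (y : ℕ → ℝ) : Prop :=
  (∀ k l, k < l → l < dd r n → y l < y k) ∧
  (∀ k < dd r n, y k < 0) ∧
  (∀ k < dd r n, (Z r n).IsRoot (y k)) ∧
  (∀ x : ℝ, (Z r n).IsRoot x → ∃ k < dd r n, x = y k)

lemma SR_inj {r n : ℕ} {y : ℕ → ℝ} (h : SR r n y) :
    ∀ k < dd r n, ∀ l < dd r n, y k = y l → k = l := by
  intro k hk l hl he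
  rcases lt_trichotomy k l with h1 | h1 | h1
  · exact absurd he (h.1 k l h1 hl).ne'
  · exact h1
  · exact absurd he (h.1 l k h1 hk).ne

/-- decomposition of Z from an SR witness -/
lemma SR_split {r n : ℕ} {y : ℕ → ℝ} (h : SR r n y) :
    Z r n = C (Z r n).leadingCoeff * ∏ k ∈ range (dd r n), (X - C (y k)) :=
  split_poly _ (Z_ne_zero r n) _ (Z_natDegree r n) y h.2.2.1 (SR_inj h)

/-- the sign of `Z r n` at a point with exactly `K` roots above it -/
lemma SR_sign {r n : ℕ} {y : ℕ → ℝ} (h : SR r n y) (x : ℝ) (K : ℕ) (hK : K ≤ dd r n)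
    (hgt : ∀ k < K, x < y k) (hlt : ∀ k, K ≤ k → k < dd r n → y k < x) :
    0 < (-1 : ℝ) ^ K * (Z r n).eval x := by
  have := countsign (dd r n) K _ (Z_leadingCoeff_pos r n) y x hK hgt hlt
  rwa [← SR_split h] at this

/-- uniqueness of the sorted enumeration -/
lemma SR_unique {r n : ℕ} {y₁ y₂ : ℕ → ℝ} (h₁ : SR r n y₁) (h₂ : SR r n y₂) :
    ∀ k < dd r n, y₁ k = y₂ k := by
  intro k
  induction k using Nat.strong_induction_on with
  | _ k ih =>
    intro hk
    by_contra hne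
    obtain ⟨l, hl, hel⟩ := h₂.2.2.2 _ (h₁.2.2.1 k hk)
    obtain ⟨l', hl', hel'⟩ := h₁.2.2.2 _ (h₂.2.2.1 k hk)
    -- y₁ k = y₂ l, y₂ k = y₁ l'
    have hlk : k < l := by
      rcases lt_trichotomy l k with h1 | h1 | h1
      · exfalso
        have e1 : y₁ l = y₂ l := ih l h1 (by omega)
        have e2 : y₁ k < y₁ l := h₁.1 l k h1 hk
        rw [e1, ← hel] at e2
        exact lt_irrefl _ e2
      · exfalso; rw [h1] at hel; exact hne hel
      · exact h1
    have hlk' : k < l' := by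
      rcases lt_trichotomy l' k with h1 | h1 | h1
      · exfalso
        have e1 : y₁ l' = y₂ l' := ih l' h1 (by omega)
        have e2 : y₂ k < y₂ l' := h₂.1 l' k h1 hk
        rw [← e1, ← hel'] at e2
        exact lt_irrefl _ e2
      · exfalso; rw [h1] at hel'; exact hne hel'.symm
      · exact h1
    have c1 : y₁ k < y₂ k := hel ▸ h₂.1 k l hlk hl
    have c2 : y₂ k < y₁ k := hel' ▸ h₁.1 k l' hlk' hl'
    linarith

/-- strictly decreasing from consecutive comparisons -/
lemma desc (m : ℕ) (f : ℕ → ℝ) (h : ∀ k, k + 1 < m → f (k + 1) < f k) :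
    ∀ k l, k < l → l < m → f l < f k := by
  intro k l hkl hlm
  induction l with
  | zero => omega
  | succ l ih =>
    rcases Nat.lt_or_ge k l with h1 | h1
    · exact (h l (by omega)).trans (ih h1 (by omega))
    · have : k = l := by omega
      subst this
      exact h k (by omega)

/-- a point far to the left where Z has sign (-1)^degree -/
lemma atbot_sign (r n : ℕ) (hd : 1 ≤ dd r n) (b : ℝ) :
    ∃ w < b, 0 < (-1 : ℝ) ^ (dd r n) * (Z r n).eval w := by
  classical
  set p := Z r n
  have hdeg : p.natDegree = dd r n := Z_natDegree r n
  set q := p.comp (-X) with hq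
  have hqdeg : q.natDegree = dd r n := by
    rw [hq, Polynomial.natDegree_comp]
    simp [hdeg]
  have hqlead : q.leadingCoeff = p.leadingCoeff * (-1 : ℝ) ^ (dd r n) := by
    rw [hq, Polynomial.leadingCoeff_comp (by simp)]
    simp [hdeg]
  have hqdeg' : 0 < q.degree := by
    rw [Polynomial.degree_eq_natDegree (fun h0 => by simp [h0] at hqdeg; omega), hqdeg]
    exact_mod_cast hd
  have heval : ∀ x : ℝ, q.eval x = p.eval (-x) := by
    intro x; rw [hq, Polynomial.eval_comp]; simp
  rcases Nat.even_or_odd (dd r n) with hpar | hpar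
  · have hl : 0 ≤ q.leadingCoeff := by
      rw [hqlead, hpar.neg_one_pow]
      have := Z_leadingCoeff_pos r n
      simp [p]; linarith
    have ht := Polynomial.tendsto_atTop_of_leadingCoeff_nonneg q hqdeg' hl
    have h1 : ∀ᶠ x in Filter.atTop, (0:ℝ) < q.eval x := ht.eventually_gt_atTop 0
    have h2 : ∀ᶠ x in Filter.atTop, -b < x := Filter.eventually_gt_atTop (-b)
    obtain ⟨x, hx1, hx2⟩ := (h1.and h2).exists
    exact ⟨-x, by linarith, by rw [hpar.neg_one_pow, one_mul, ← heval x]; exact hx1⟩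
  · have hl : q.leadingCoeff ≤ 0 := by
      rw [hqlead, hpar.neg_one_pow]
      have := Z_leadingCoeff_pos r n
      simp [p]; linarith
    have ht := Polynomial.tendsto_atBot_of_leadingCoeff_nonpos q hqdeg' hl
    have h1 : ∀ᶠ x in Filter.atTop, q.eval x < 0 := ht.eventually_lt_atBot 0
    have h2 : ∀ᶠ x in Filter.atTop, -b < x := Filter.eventually_gt_atTop (-b)
    obtain ⟨x, hx1, hx2⟩ := (h1.and h2).exists
    refine ⟨-x, by linarith, ?_⟩
    rw [hpar.neg_one_pow, ← heval x]
    linarith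

lemma step (r n : ℕ) (hr : 1 ≤ r) (y : ℕ → ℝ) (hy : SR r n y)
    (hsgn : ∀ k < dd r n, 0 < (-1 : ℝ) ^ k * (Z r (n - r)).eval (y k)) :
    ∃ y' : ℕ → ℝ, SR r (n + 1) y' ∧ (∀ k < dd r n, y k < y' k) ∧
      (∀ k, k + 1 < dd r (n + 1) → y' (k + 1) < y k) := by
  classical
  set D := dd r n with hD
  set D' := dd r (n + 1) with hD'
  have hDle : D ≤ D' := dd_mono r (by omega)
  have hD'le : D' ≤ D + 1 := dd_succ_le r n
  have hD'1 : 1 ≤ D' := by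
    rw [hD']; unfold dd
    rw [Nat.le_div_iff_mul_le (Nat.succ_pos r)]
    omega
  -- sign of Z_{n+1} at the roots of Z_n
  have hsign : ∀ k < D, 0 < (-1 : ℝ) ^ (k + 1) * (Z r (n + 1)).eval (y k) := by
    intro k hk
    rw [Z_rec r n hr]
    simp only [Polynomial.eval_add, Polynomial.eval_mul, Polynomial.eval_X]
    rw [hy.2.2.1 k hk]
    have h1 := hsgn k hk
    have h2 : 0 < -(y k) := neg_pos.mpr (hy.2.1 k hk)
    rw [pow_succ]
    nlinarith [mul_pos h2 h1]
  -- upper endpoint of the k-th slot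
  set up : ℕ → ℝ := fun k => if k = 0 then 0 else y (k - 1) with hup
  have hupneg : ∀ k, 1 ≤ k → k < D' → up k < 0 := by
    intro k h1 h2
    simp only [hup]
    rw [if_neg (by omega)]
    exact hy.2.1 (k - 1) (by omega)
  have hupsign : ∀ k < D', 0 < (-1 : ℝ) ^ k * (Z r (n + 1)).eval (up k) := by
    intro k hk
    rcases Nat.eq_zero_or_pos k with rfl | h1
    · simp [hup, Z_eval_zero]
    · obtain ⟨kk, rfl⟩ : ∃ kk, k = kk + 1 := ⟨k - 1, by omega⟩
      simp only [hup, if_neg (Nat.succ_ne_zero kk), Nat.add_sub_cancel]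
      exact hsign kk (by omega)
  -- existence of a root in each slot
  have claim : ∀ k < D', ∃ x, (Z r (n + 1)).IsRoot x ∧ x < up k ∧ (k < D → y k < x) := by
    intro k hk
    have hcont : ContinuousOn (fun x => (Z r (n + 1)).eval x) (Set.Icc (0:ℝ) 0 ∪ Set.univ) :=
      (Polynomial.continuous _).continuousOn
    -- pick the lower endpoint
    have hlo : ∃ lo, lo < up k ∧ (k < D → lo = y k) ∧
        0 < (-1 : ℝ) ^ (k + 1) * (Z r (n + 1)).eval lo := by
      rcases Nat.lt_or_ge k D with hkD | hkD
      · refine ⟨y k, ?_, fun _ => rfl, hsign k hkD⟩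
        rcases Nat.eq_zero_or_pos k with rfl | h1
        · simp only [hup, if_pos rfl]
          exact hy.2.1 0 hkD
        · simp only [hup, if_neg (by omega : ¬ k = 0)]
          exact hy.1 (k - 1) k (by omega) hkD
      · have hkD' : k = D := by omega
        have hDD' : D' = D + 1 := by omega
        obtain ⟨w, hw1, hw2⟩ := atbot_sign r (n + 1) hD'1 (up k)
        refine ⟨w, hw1, fun h => absurd h (by omega), ?_⟩
        rw [← hD'] at hw2
        rw [hDD', ← hkD'] at hw2
        exact hw2
    obtain ⟨lo, hlo1, hlo2, hlo3⟩ := hlo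
    have hups := hupsign k hk
    rcases Nat.even_or_odd k with hpar | hpar
    · -- k even : eval lo < 0 < eval up
      have h1 : (Z r (n + 1)).eval lo < 0 := (parity_sign hlo3).2 (Even.add_one hpar)
      have h2 : 0 < (Z r (n + 1)).eval (up k) := (parity_sign hups).1 hpar
      have := intermediate_value_Ioo (le_of_lt hlo1)
        ((Polynomial.continuous (Z r (n + 1))).continuousOn (s := Set.Icc lo (up k)))
      obtain ⟨x, hx, hfx⟩ := this (Set.mem_Ioo.mpr ⟨h1, h2⟩)
      exact ⟨x, hfx, hx.2, fun hkD => (hlo2 hkD) ▸ hx.1⟩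
    · have h1 : 0 < (Z r (n + 1)).eval lo := (parity_sign hlo3).1 (Odd.add_one hpar)
      have h2 : (Z r (n + 1)).eval (up k) < 0 := (parity_sign hups).2 hpar
      have := intermediate_value_Ioo' (le_of_lt hlo1)
        ((Polynomial.continuous (Z r (n + 1))).continuousOn (s := Set.Icc lo (up k)))
      obtain ⟨x, hx, hfx⟩ := this (Set.mem_Ioo.mpr ⟨h2, h1⟩)
      exact ⟨x, hfx, hx.2, fun hkD => (hlo2 hkD) ▸ hx.1⟩
  -- define the new root list
  set y' : ℕ → ℝ := fun k => if h : k < D' then (claim k h).choose else 0 with hy'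
  have hy'spec : ∀ k (h : k < D'), (Z r (n + 1)).IsRoot (y' k) ∧ y' k < up k ∧ (k < D → y k < y' k) := by
    intro k h
    simp only [hy', dif_pos h]
    exact (claim k h).choose_spec
  have hy'up : ∀ k, k < D' → y' k < up k := fun k h => (hy'spec k h).2.1
  have hy'lo : ∀ k, k < D → y k < y' k := fun k h => (hy'spec k (by omega)).2.2 h
  have hy'root : ∀ k, k < D' → (Z r (n + 1)).IsRoot (y' k) := fun k h => (hy'spec k h).1
  have hcons : ∀ k, k + 1 < D' → y' (k + 1) < y k := by
    intro k h
    have := hy'up (k + 1) h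
    simpa only [hup, if_neg (Nat.succ_ne_zero k), Nat.add_sub_cancel] using this
  have hanti : ∀ k l, k < l → l < D' → y' l < y' k := by
    apply desc
    intro k h
    exact lt_trans (hcons k h) (hy'lo k (by omega))
  have hneg : ∀ k, k < D' → y' k < 0 := by
    intro k h
    rcases Nat.eq_zero_or_pos k with rfl | h1
    · have := hy'up 0 h
      simpa only [hup, if_pos rfl] using this
    · exact lt_trans (hy'up k h) (hupneg k h1 h)
  have hcomp : ∀ x : ℝ, (Z r (n + 1)).IsRoot x → ∃ k < D', x = y' k := by
    intro x hx
    by_contra hcon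
    push_neg at hcon
    set g : ℕ → ℝ := fun k => if k < D' then y' k else x with hg
    have hle := distinct_roots_le (Z r (n + 1)) (Z_ne_zero r (n + 1)) (D' + 1) g ?_ ?_
    · rw [Z_natDegree] at hle
      omega
    · intro k hk
      simp only [hg]
      split
      · exact hy'root k (by assumption)
      · exact hx
    · intro k hk l hl he
      simp only [hg] at he
      rcases Nat.lt_or_ge k D' with h1 | h1 <;> rcases Nat.lt_or_ge l D' with h2 | h2
      · rw [if_pos h1, if_pos h2] at he
        rcases lt_trichotomy k l with h3 | h3 | h3
        · exact absurd he (hanti k l h3 h2).ne'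
        · exact h3
        · exact absurd he (hanti l k h3 h1).ne
      · rw [if_pos h1, if_neg (by omega)] at he
        exact absurd he.symm (hcon k h1)
      · rw [if_neg (by omega), if_pos h2] at he
        exact absurd he (hcon l h2)
      · omega
  refine ⟨y', ⟨hanti, hneg, hy'root, hcomp⟩, hy'lo, hcons⟩

lemma dd_le_sub_add (r n : ℕ) (hr : 1 ≤ r) : dd r n ≤ dd r (n - r) + 1 := by
  rcases Nat.lt_or_ge n (r + 1) with h | h
  · have h1 : dd r n ≤ 1 := by
      unfold dd
      rw [Nat.div_le_iff_le_mul_add_pred (Nat.succ_pos r)]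
      omega
    omega
  · obtain ⟨m, rfl⟩ : ∃ m, n = m + 1 := ⟨n - 1, by omega⟩
    rw [dd_sub_r r m (by omega)]
    have : m - r ≤ m + 1 - r := by omega
    have := dd_mono r this
    omega

/-- sign of `Z r (n-r)` at the roots of `Z r n`, given interlacing positions -/
lemma sgn_from_pos (r n : ℕ) (hr : 1 ≤ r) (y z : ℕ → ℝ) (hy : SR r n y) (hz : SR r (n - r) z)
    (hpos1 : ∀ k < dd r (n - r), z k < y k)
    (hpos2 : ∀ k, k + 1 < dd r n → y (k + 1) < z k) :
    ∀ k < dd r n, 0 < (-1 : ℝ) ^ k * (Z r (n - r)).eval (y k) := by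
  intro k hk
  have hK : k ≤ dd r (n - r) := by
    have := dd_le_sub_add r n hr
    omega
  apply SR_sign hz (y k) k hK
  · intro l hl
    have hk1 : 1 ≤ k := by omega
    have h1 : y k < z (k - 1) := by
      have := hpos2 (k - 1) (by omega)
      rwa [Nat.sub_add_cancel hk1] at this
    rcases Nat.lt_or_ge l (k - 1) with h2 | h2
    · have h3 : z (k - 1) < z l := hz.1 l (k - 1) h2 (by omega)
      linarith
    · have : l = k - 1 := by omega
      subst this
      exact h1
  · intro l hl1 hl2
    have hkd : k < dd r (n - r) := by omega
    have h1 : z k < y k := hpos1 k hkd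
    rcases Nat.lt_or_ge k l with h2 | h2
    · have h3 : z l < z k := hz.1 k l h2 hl2
      linarith
    · have : l = k := by omega
      subst this
      exact h1

/-- componentwise monotonicity composed over several steps -/
lemma chain (r N : ℕ) (HEX : ∀ t, t ≤ N → ∃ w, SR r t w)
    (HMI : ∀ t, t < N → ∀ w w', SR r t w → SR r (t + 1) w' → ∀ k < dd r t, w k < w' k) :
    ∀ b, b ≤ N → ∀ a, a < b → ∀ ya yb, SR r a ya → SR r b yb → ∀ k < dd r a, ya k < yb k := by
  intro b
  induction b with
  | zero => omega
  | succ b ih =>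
    intro hbN a hab ya yb hya hyb k hk
    rcases Nat.lt_or_ge a b with h1 | h1
    · obtain ⟨w, hw⟩ := HEX b (by omega)
      have h2 := ih (by omega) a h1 ya w hya hw k hk
      have h3 := HMI b (by omega) w yb hw hyb k (lt_of_lt_of_le hk (dd_mono r h1.le))
      linarith
    · have : a = b := by omega
      subst this
      exact HMI a (by omega) ya yb hya hyb k hk

/-- monotone-interlacing between consecutive partition functions -/
def MIs (r n : ℕ) : Prop := ∀ y y', SR r (n - 1) y → SR r n y' →
  (∀ k < dd r (n - 1), y k < y' k) ∧ (∀ k, k + 1 < dd r n → y' (k + 1) < y k)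

/-- interlacing of `Z r (n-r)` below `Z r n` -/
def POs (r n : ℕ) : Prop := ∀ y z, SR r n y → SR r (n - r) z →
  (∀ k < dd r (n - r), z k < y k) ∧ (∀ k, k + 1 < dd r n → y (k + 1) < z k)

theorem big (r : ℕ) (hr : 1 ≤ r) : ∀ n, (∃ y, SR r n y) ∧ MIs r n ∧ POs r n := by
  intro n
  induction n using Nat.strong_induction_on with
  | _ n HB =>
  match n with
  | 0 =>
    have hdd0 : dd r 0 = 0 := Nat.div_eq_of_lt (by omega)
    have hZ0 : ∀ x : ℝ, ¬ (Z r 0).IsRoot x := by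
      intro x hx
      have h1 : Z r 0 = C ((Z r 0).coeff 0) := by
        apply Polynomial.eq_C_of_natDegree_eq_zero
        rw [Z_natDegree, hdd0]
      have h2 : (Z r 0).coeff 0 = 1 := by
        rw [Polynomial.coeff_zero_eq_eval_zero, Z_eval_zero]
      rw [Polynomial.IsRoot, h1, h2] at hx
      simp at hx
    refine ⟨⟨fun _ => 0, ?_, ?_, ?_, ?_⟩, ?_, ?_⟩
    · intro k l _ hl; rw [hdd0] at hl; omega
    · intro k hk; rw [hdd0] at hk; omega
    · intro k hk; rw [hdd0] at hk; omega
    · intro x hx; exact absurd hx (hZ0 x)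
    · intro y y' _ _
      constructor
      · intro k hk; simp only [Nat.zero_sub, hdd0] at hk; omega
      · intro k hk; rw [hdd0] at hk; omega
    · intro y z _ _
      constructor
      · intro k hk; simp only [Nat.zero_sub, hdd0] at hk; omega
      · intro k hk; rw [hdd0] at hk; omega
  | (n + 1) =>
    -- gather induction hypotheses
    obtain ⟨y, hy⟩ := (HB n (by omega)).1
    obtain ⟨z, hz⟩ := (HB (n - r) (by omega)).1
    have hPOn := (HB n (by omega)).2.2 y z hy hz
    have hsgn := sgn_from_pos r n hr y z hy hz hPOn.1 hPOn.2
    obtain ⟨y', hy', hslot1, hslot2⟩ := step r n hr y hy hsgn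
    have hEX : ∃ w, SR r (n + 1) w := ⟨y', hy'⟩
    have hddle : dd r (n + 1) ≤ dd r n + 1 := dd_succ_le r n
    have hddmono : dd r n ≤ dd r (n + 1) := dd_mono r (by omega)
    -- MIs (n+1)
    have hMI : MIs r (n + 1) := by
      intro ya yb hya hyb
      simp only [Nat.add_sub_cancel] at hya ⊢
      have e1 : ∀ k < dd r n, ya k = y k := SR_unique hya hy
      have e2 : ∀ k < dd r (n + 1), yb k = y' k := SR_unique hyb hy'
      constructor
      · intro k hk
        rw [e1 k hk, e2 k (by omega)]
        exact hslot1 k hk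
      · intro k hk
        rw [e1 k (by omega), e2 (k + 1) hk]
        exact hslot2 k hk
    -- chain of monotonicity up to n+1
    have hCH := chain r (n + 1)
      (fun t ht => by
        rcases Nat.lt_or_ge t (n + 1) with h | h
        · exact (HB t h).1
        · have : t = n + 1 := by omega
          subst this; exact hEX)
      (fun t ht w w' hw hw' => by
        rcases Nat.lt_or_ge (t + 1) (n + 1) with h | h
        · exact fun k hk => ((HB (t + 1) h).2.1 w w' (by simpa using hw) hw').1 k (by simpa using hk)
        · have : t = n := by omega
          subst this
          exact fun k hk => (hMI w w' (by simpa using hw) hw').1 k (by simpa using hk))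
    -- POs (n+1)
    have hPO : POs r (n + 1) := by
      intro ya u hya hu
      rcases Nat.lt_or_ge n r with hnr | hnr
      · -- degenerate small case
        have h0 : n + 1 - r = 0 := by omega
        have hdd1 : dd r (n + 1) ≤ 1 := by
          unfold dd
          rw [Nat.div_le_iff_le_mul_add_pred (Nat.succ_pos r)]
          omega
        rw [h0] at hu
        constructor
        · intro k hk
          rw [h0] at hk
          have : dd r 0 = 0 := Nat.div_eq_of_lt (by omega)
          omega
        · intro k hk
          omega
      · -- main case
        have hmeq : n + 1 - r = (n - r) + 1 := by omega
        rw [hmeq] at hu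
        have hddr : dd r (n + 1) = dd r (n - r) + 1 := dd_sub_r r n hnr
        have e1 : ∀ k < dd r (n + 1), ya k = y' k := SR_unique hya hy'
        have hmu := (HB ((n - r) + 1) (by omega)).2.1 z u (by simpa using hz) hu
        constructor
        · intro k hk
          rw [hmeq] at hk
          exact hCH (n + 1) (le_refl _) ((n - r) + 1) (by omega) u ya hu hya k hk
        · intro k hk
          have hkm : k < dd r (n - r) := by omega
          have hkn : k < dd r n := lt_of_lt_of_le hkm (dd_mono r (by omega))
          -- y k sits above ya (k+1)
          have hyk : ya (k + 1) < y k := (hMI y ya (by simpa using hy) hya).2 k hk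
          -- sign of Z r n at ya (k+1)
          have hsZn : 0 < (-1 : ℝ) ^ (k + 1) * (Z r n).eval (ya (k + 1)) := by
            apply SR_sign hy (ya (k + 1)) (k + 1) (by omega)
            · intro l hl
              rcases Nat.lt_or_ge l k with h2 | h2
              · exact lt_trans hyk (hy.1 l k h2 hkn)
              · have : l = k := by omega
                subst this; exact hyk
            · intro l hl1 hl2
              have h3 : y (k + 1) < ya (k + 1) := (hMI y ya (by simpa using hy) hya).1 (k + 1) (by simp only [Nat.add_sub_cancel]; omega)
              rcases Nat.lt_or_ge (k + 1) l with h2 | h2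
              · exact lt_trans (hy.1 (k + 1) l h2 hl2) h3
              · have : l = k + 1 := by omega
                subst this; exact h3
          -- sign of Z r (n - r) at ya (k+1)
          have hyaneg : ya (k + 1) < 0 := hya.2.1 (k + 1) hk
          have hroot : (Z r (n + 1)).eval (ya (k + 1)) = 0 := hya.2.2.1 (k + 1) hk
          have heq : (Z r n).eval (ya (k + 1)) = -(ya (k + 1) * (Z r (n - r)).eval (ya (k + 1))) := by
            have := Z_rec r n hr
            have h4 : (Z r (n + 1)).eval (ya (k + 1)) =
                (Z r n).eval (ya (k + 1)) + ya (k + 1) * (Z r (n - r)).eval (ya (k + 1)) := by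
              rw [this]; simp [Polynomial.eval_add, Polynomial.eval_mul]
            rw [hroot] at h4
            linarith
          have hsE : 0 < (-1 : ℝ) ^ (k + 1) * (Z r (n - r)).eval (ya (k + 1)) := by
            rw [heq] at hsZn
            nlinarith [hsZn, hyaneg]
          -- now conclude by contradiction
          by_contra hcon
          push_neg at hcon
          have hzu : z k < u k := hmu.1 k (by simpa using hkm)
          have hzya : z k < ya (k + 1) := lt_of_lt_of_le hzu hcon
          have hsE' : 0 < (-1 : ℝ) ^ k * (Z r (n - r)).eval (ya (k + 1)) := by
            apply SR_sign hz (ya (k + 1)) k (by omega)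
            · intro l hl
              have hk1 : 1 ≤ k := by omega
              have h5 : y k < z (k - 1) := by
                have := hPOn.2 (k - 1) (by omega)
                rwa [Nat.sub_add_cancel hk1] at this
              have h6 : ya (k + 1) < z (k - 1) := lt_trans hyk h5
              rcases Nat.lt_or_ge l (k - 1) with h2 | h2
              · exact lt_trans h6 (hz.1 l (k - 1) h2 (by omega))
              · have : l = k - 1 := by omega
                subst this; exact h6
            · intro l hl1 hl2
              rcases Nat.lt_or_ge k l with h2 | h2
              · exact lt_trans (hz.1 k l h2 hl2) hzya
              · have : l = k := by omega
                subst this; exact hzya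
          exact absurd hsE (fun h => sign_incompat hsE' h)
    exact ⟨hEX, hMI, hPO⟩

/-- Lemma 1, monotonicity of roots within a group: Fix `r ≥ 1`, `i ≥ 0` and
`1 ≤ j ≤ r`. If `y` (resp. `y'`) lists the `i+1` distinct negative real roots of
`Z_{(r+1)i+j}` (resp. `Z_{(r+1)i+j+1}`) in decreasing order, then for every `m`
the `m`-th root satisfies `y_{m,(r+1)i+j+1} > y_{m,(r+1)i+j}`. -/
theorem Z_roots_mono_within_group (r i j : ℕ) (hr : 1 ≤ r) (hj1 : 1 ≤ j) (hj2 : j ≤ r)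
    (y y' : Fin (i + 1) → ℝ)
    (hy_anti : StrictAnti y) (hy'_anti : StrictAnti y')
    (hy_neg : ∀ k, y k < 0) (hy'_neg : ∀ k, y' k < 0)
    (hy_root : ∀ k, (Z r ((r + 1) * i + j)).IsRoot (y k))
    (hy'_root : ∀ k, (Z r ((r + 1) * i + j + 1)).IsRoot (y' k))
    (hy_all : ∀ x : ℝ, (Z r ((r + 1) * i + j)).IsRoot x → ∃ k, x = y k)
    (hy'_all : ∀ x : ℝ, (Z r ((r + 1) * i + j + 1)).IsRoot x → ∃ k, x = y' k) :
    ∀ k : Fin (i + 1), y k < y' k := by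
  set n := (r + 1) * i + j with hn
  have hdn : dd r n = i + 1 := by
    unfold dd
    have e : n + r = (j + r) + i * (r + 1) := by rw [hn]; ring
    rw [e, Nat.add_mul_div_right _ _ (Nat.succ_pos r)]
    have h2 : (j + r) / (r + 1) = 1 := by
      apply Nat.div_eq_of_lt_le <;> omega
    simp only [Nat.succ_eq_add_one] at h2 ⊢
    omega
  have hdn1 : dd r (n + 1) = i + 1 := by
    unfold dd
    have e : n + 1 + r = (j + 1 + r) + i * (r + 1) := by rw [hn]; ring
    rw [e, Nat.add_mul_div_right _ _ (Nat.succ_pos r)]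
    have h2 : (j + 1 + r) / (r + 1) = 1 := by
      apply Nat.div_eq_of_lt_le <;> omega
    simp only [Nat.succ_eq_add_one] at h2 ⊢
    omega
  classical
  set Y : ℕ → ℝ := fun k => if h : k < i + 1 then y ⟨k, h⟩ else 0 with hY
  set Y' : ℕ → ℝ := fun k => if h : k < i + 1 then y' ⟨k, h⟩ else 0 with hY'
  have hSRY : SR r n Y := by
    refine ⟨?_, ?_, ?_, ?_⟩
    · intro k l hkl hl
      rw [hdn] at hl
      simp only [hY, dif_pos hl, dif_pos (lt_trans hkl hl)]
      exact hy_anti (show (⟨k, lt_trans hkl hl⟩ : Fin (i+1)) < ⟨l, hl⟩ from hkl)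
    · intro k hk
      rw [hdn] at hk
      simp only [hY, dif_pos hk]
      exact hy_neg _
    · intro k hk
      rw [hdn] at hk
      simp only [hY, dif_pos hk]
      exact hy_root _
    · intro x hx
      obtain ⟨k, hk⟩ := hy_all x hx
      refine ⟨k.val, by rw [hdn]; exact k.isLt, ?_⟩
      simp only [hY, dif_pos k.isLt]
      rw [hk]
  have hSRY' : SR r (n + 1) Y' := by
    refine ⟨?_, ?_, ?_, ?_⟩
    · intro k l hkl hl
      rw [hdn1] at hl
      simp only [hY', dif_pos hl, dif_pos (lt_trans hkl hl)]
      exact hy'_anti (show (⟨k, lt_trans hkl hl⟩ : Fin (i+1)) < ⟨l, hl⟩ from hkl)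
    · intro k hk
      rw [hdn1] at hk
      simp only [hY', dif_pos hk]
      exact hy'_neg _
    · intro k hk
      rw [hdn1] at hk
      simp only [hY', dif_pos hk]
      exact hy'_root _
    · intro x hx
      obtain ⟨k, hk⟩ := hy'_all x hx
      refine ⟨k.val, by rw [hdn1]; exact k.isLt, ?_⟩
      simp only [hY', dif_pos k.isLt]
      rw [hk]
  have hMI := (big r hr (n + 1)).2.1 Y Y' (by simpa using hSRY) hSRY'
  intro k
  have h1 := hMI.1 k.val (by simp only [Nat.add_sub_cancel]; rw [hdn]; exact k.isLt)
  simpa only [hY, hY', dif_pos k.isLt] using h1
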